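/- If every connected graph with minimum degree at least 4 that has no subgraph isomorphic to K₅⁻ and belongs to a subgraph-closed class 𝒢 contains an induced subgraph isomorphic to the kite graph, K₅ minus two adjacent edges, or the house graph (as an induced subgraph), then every graph in 𝒢 with no K₅⁻ subgraph is weakly 3-degenerate. (Minimal-counterexample argument: a vertex-minimal non-weakly-3-degenerate graph is connected with minimum degree ≥ 4, and by the GDP-tree lemma cannot contain any of the three listed configurations as an induced subgraph whose vertices all have degree 4.) -/

import Mathlib

open scoped Classical

noncomputable section

/-- One round of the removal process for (weak) degeneracy. `Reduce G save S f` means that,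
in the graph `G`, all vertices of the remaining set `S` can be removed by a sequence of legal
`Delete` operations (and, if `save = true`, also `DeleteSave` operations), starting from the
value function `f`.  `Delete(G,f,u)` removes `u` and decreases `f` by one on each neighbor of
`u`; it is legal if the resulting function is nonnegative (on the remaining vertices).
`DeleteSave(G,f,u,w)`, for `w` a neighbor of `u`, removes `u` and decreases `f` by one on each
neighbor of `u` other than `w`; it is legal if moreover `f u > f w`. -/
inductive Reduce {V : Type*} [DecidableEq V] (G : SimpleGraph V) (save : Bool) :
    Finset V → (V → ℤ) → Prop
  | empty (f : V → ℤ) : Reduce G save ∅ f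
  | delete {S : Finset V} {f : V → ℤ} (u : V) (hu : u ∈ S)
      (hleg : ∀ v ∈ S.erase u, 0 ≤ if G.Adj u v then f v - 1 else f v)
      (h : Reduce G save (S.erase u) (fun v => if G.Adj u v then f v - 1 else f v)) :
      Reduce G save S f
  | deleteSave {S : Finset V} {f : V → ℤ} (u w : V) (hsave : save = true)
      (hu : u ∈ S) (hw : w ∈ S) (hadj : G.Adj u w) (hfw : f w < f u)
      (hleg : ∀ v ∈ S.erase u, 0 ≤ if G.Adj u v ∧ v ≠ w then f v - 1 else f v)
      (h : Reduce G save (S.erase u) (fun v => if G.Adj u v ∧ v ≠ w then f v - 1 else f v)) :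
      Reduce G save S f

/-- `G` is weakly `f`-degenerate: all vertices can be removed by legal `Delete` and
`DeleteSave` operations. -/
def WeaklyFDegenerate {V : Type*} [Fintype V] [DecidableEq V] (G : SimpleGraph V)
    (f : V → ℤ) : Prop :=
  Reduce G true Finset.univ f

/-- `G` is `f`-degenerate: all vertices can be removed by legal `Delete` operations only. -/
def FDegenerate {V : Type*} [Fintype V] [DecidableEq V] (G : SimpleGraph V)
    (f : V → ℤ) : Prop :=
  Reduce G false Finset.univ f

/-- The weak degeneracy `wd(G)`: the least `d` such that `G` is weakly `d`-degenerate. -/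
def wdNum {V : Type*} [Fintype V] [DecidableEq V] (G : SimpleGraph V) : ℕ :=
  sInf {d : ℕ | WeaklyFDegenerate G (fun _ => (d : ℤ))}

/-- The degeneracy `d(G)`: the least `d` such that `G` is `d`-degenerate. -/
def degNum {V : Type*} [Fintype V] [DecidableEq V] (G : SimpleGraph V) : ℕ :=
  sInf {d : ℕ | FDegenerate G (fun _ => (d : ℤ))}

/-- `G` contains `K₅⁻` (a `K₅` missing one edge) as a subgraph (not necessarily induced):
five distinct vertices with all ten pairs adjacent except possibly the pair `d, e`. -/
def HasK5MinusSubgraph {V : Type*} (G : SimpleGraph V) : Prop :=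
  ∃ a b c d e : V,
    a ≠ b ∧ a ≠ c ∧ a ≠ d ∧ a ≠ e ∧ b ≠ c ∧ b ≠ d ∧ b ≠ e ∧ c ≠ d ∧ c ≠ e ∧ d ≠ e ∧
    G.Adj a b ∧ G.Adj a c ∧ G.Adj a d ∧ G.Adj a e ∧
    G.Adj b c ∧ G.Adj b d ∧ G.Adj b e ∧ G.Adj c d ∧ G.Adj c e

/-- `G` contains an induced kite (4-cycle `abcd` plus chord `ac`) in which all four
vertices have degree 4 in `G`. -/
def HasInducedKite4 {V : Type*} [Fintype V] (G : SimpleGraph V) : Prop :=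
  ∃ a b c d : V,
    a ≠ b ∧ a ≠ c ∧ a ≠ d ∧ b ≠ c ∧ b ≠ d ∧ c ≠ d ∧
    G.Adj a b ∧ G.Adj b c ∧ G.Adj c d ∧ G.Adj d a ∧ G.Adj a c ∧ ¬ G.Adj b d ∧
    G.degree a = 4 ∧ G.degree b = 4 ∧ G.degree c = 4 ∧ G.degree d = 4

/-- `G` contains an induced `K₅` minus two adjacent edges (on `v₁, …, v₅`, all edges of
`K₅` present except `v₂v₄` and `v₂v₅`) in which all five vertices have degree 4 in `G`. -/
def HasInducedK5mm4 {V : Type*} [Fintype V] (G : SimpleGraph V) : Prop :=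
  ∃ v₁ v₂ v₃ v₄ v₅ : V,
    v₁ ≠ v₂ ∧ v₁ ≠ v₃ ∧ v₁ ≠ v₄ ∧ v₁ ≠ v₅ ∧ v₂ ≠ v₃ ∧ v₂ ≠ v₄ ∧ v₂ ≠ v₅ ∧
    v₃ ≠ v₄ ∧ v₃ ≠ v₅ ∧ v₄ ≠ v₅ ∧
    G.Adj v₁ v₂ ∧ G.Adj v₁ v₃ ∧ G.Adj v₁ v₄ ∧ G.Adj v₁ v₅ ∧
    G.Adj v₂ v₃ ∧ G.Adj v₃ v₄ ∧ G.Adj v₃ v₅ ∧ G.Adj v₄ v₅ ∧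
    ¬ G.Adj v₂ v₄ ∧ ¬ G.Adj v₂ v₅ ∧
    G.degree v₁ = 4 ∧ G.degree v₂ = 4 ∧ G.degree v₃ = 4 ∧ G.degree v₄ = 4 ∧ G.degree v₅ = 4

/-- `G` contains an induced house (4-cycle `x₁x₂x₃x₄` plus a vertex `x₅` adjacent to `x₁`
and `x₄`) in which all five vertices have degree 4 in `G`. -/
def HasInducedHouse4 {V : Type*} [Fintype V] (G : SimpleGraph V) : Prop :=
  ∃ x₁ x₂ x₃ x₄ x₅ : V,
    x₁ ≠ x₂ ∧ x₁ ≠ x₃ ∧ x₁ ≠ x₄ ∧ x₁ ≠ x₅ ∧ x₂ ≠ x₃ ∧ x₂ ≠ x₄ ∧ x₂ ≠ x₅ ∧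
    x₃ ≠ x₄ ∧ x₃ ≠ x₅ ∧ x₄ ≠ x₅ ∧
    G.Adj x₁ x₂ ∧ G.Adj x₂ x₃ ∧ G.Adj x₃ x₄ ∧ G.Adj x₄ x₁ ∧ G.Adj x₁ x₅ ∧ G.Adj x₄ x₅ ∧
    ¬ G.Adj x₁ x₃ ∧ ¬ G.Adj x₂ x₄ ∧ ¬ G.Adj x₂ x₅ ∧ ¬ G.Adj x₃ x₅ ∧
    G.degree x₁ = 4 ∧ G.degree x₂ = 4 ∧ G.degree x₃ = 4 ∧ G.degree x₄ = 4 ∧ G.degree x₅ = 4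

/-- `G` contains the house graph as a subgraph (not necessarily induced) in which all five
vertices have degree 4 in `G`. -/
def HasHouseSubgraph4 {V : Type*} [Fintype V] (G : SimpleGraph V) : Prop :=
  ∃ x₁ x₂ x₃ x₄ x₅ : V,
    x₁ ≠ x₂ ∧ x₁ ≠ x₃ ∧ x₁ ≠ x₄ ∧ x₁ ≠ x₅ ∧ x₂ ≠ x₃ ∧ x₂ ≠ x₄ ∧ x₂ ≠ x₅ ∧
    x₃ ≠ x₄ ∧ x₃ ≠ x₅ ∧ x₄ ≠ x₅ ∧
    G.Adj x₁ x₂ ∧ G.Adj x₂ x₃ ∧ G.Adj x₃ x₄ ∧ G.Adj x₄ x₁ ∧ G.Adj x₁ x₅ ∧ G.Adj x₄ x₅ ∧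
    G.degree x₁ = 4 ∧ G.degree x₂ = 4 ∧ G.degree x₃ = 4 ∧ G.degree x₄ = 4 ∧ G.degree x₅ = 4

variable {V : Type*} [DecidableEq V] {G : SimpleGraph V} {save : Bool}

lemma reduce_congr {S : Finset V} {f g : V → ℤ}
    (h : Reduce G save S f) (hfg : ∀ v ∈ S, f v = g v) : Reduce G save S g := by
  induction h generalizing g with
  | empty => exact .empty g
  | delete u hu hleg h ih =>
      refine .delete u hu (fun v hv => ?_) (ih (fun v hv => ?_))
      · rw [← hfg v (Finset.mem_of_mem_erase hv)]; exact hleg v hv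
      · dsimp only; rw [hfg v (Finset.mem_of_mem_erase hv)]
  | deleteSave u w hsave hu hw hadj hfw hleg h ih =>
      refine .deleteSave u w hsave hu hw hadj ?_ (fun v hv => ?_) (ih (fun v hv => ?_))
      · rw [← hfg w hw, ← hfg u hu]; exact hfw
      · rw [← hfg v (Finset.mem_of_mem_erase hv)]; exact hleg v hv
      · dsimp only; rw [hfg v (Finset.mem_of_mem_erase hv)]

lemma reduce_mono {S : Finset V} {f g : V → ℤ}
    (h : Reduce G save S f) (hfg : ∀ v ∈ S, f v ≤ g v) : Reduce G save S g := by
  induction h generalizing g with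
  | empty => exact .empty g
  | delete u hu hleg h ih =>
      refine .delete u hu (fun v hv => ?_) (ih (fun v hv => ?_)) <;>
      · have h1 := hleg v hv
        have h2 := hfg v (Finset.mem_of_mem_erase hv)
        try dsimp only
        split <;> split at h1 <;> first | omega | tauto
  | @deleteSave S' f' u w hsave hu hw hadj hfw hleg h ih =>
      by_cases hgw : g w < g u
      · refine .deleteSave u w hsave hu hw hadj hgw (fun v hv => ?_) (ih (fun v hv => ?_)) <;>
        · have h1 := hleg v hv
          have h2 := hfg v (Finset.mem_of_mem_erase hv)
          try dsimp only
          split <;> split at h1 <;> first | omega | tauto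
      · have hfw0 : 0 ≤ f' w := by
          have := hleg w (Finset.mem_erase.2 ⟨hadj.ne', hw⟩)
          simpa using this
        have hgwb : f' w < g w := lt_of_lt_of_le (lt_of_lt_of_le hfw (hfg u hu)) (not_lt.1 hgw)
        refine .delete u hu (fun v hv => ?_) (ih (fun v hv => ?_))
        · have h1 := hleg v hv
          have h2 := hfg v (Finset.mem_of_mem_erase hv)
          by_cases hvw : v = w
          · subst hvw; rw [if_pos hadj]; omega
          · split
            · rw [if_pos ⟨by assumption, hvw⟩] at h1; omega
            · rw [if_neg (by tauto)] at h1; omega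
        · have h2 := hfg v (Finset.mem_of_mem_erase hv)
          dsimp only
          by_cases hvw : v = w
          · subst hvw; rw [if_neg (by tauto), if_pos hadj]; omega
          · split
            · rw [if_pos (by tauto)]; omega
            · rw [if_neg (by tauto)]; omega

lemma card_nbr_erase [Fintype V] (u v : V) (S : Finset V) (hu : u ∈ S) (huv : v ≠ u) :
    ((G.neighborFinset v ∩ S.erase u).card : ℤ)
      = (G.neighborFinset v ∩ S).card - (if G.Adj u v then 1 else 0) := by
  by_cases hadj : G.Adj u v
  · rw [if_pos hadj]
    have h1 : G.neighborFinset v ∩ S.erase u = (G.neighborFinset v ∩ S).erase u := by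
      ext x
      simp only [Finset.mem_inter, Finset.mem_erase]
      tauto
    have hm : u ∈ G.neighborFinset v ∩ S := by
      simp [SimpleGraph.mem_neighborFinset, hadj.symm, hu]
    rw [h1, Finset.card_erase_of_mem hm]
    have : 1 ≤ (G.neighborFinset v ∩ S).card := Finset.card_pos.2 ⟨u, hm⟩
    push_cast [Nat.cast_sub this]
    ring
  · rw [if_neg hadj]
    have h1 : G.neighborFinset v ∩ S.erase u = G.neighborFinset v ∩ S := by
      ext x
      simp only [Finset.mem_inter, Finset.mem_erase]
      constructor
      · tauto
      · rintro ⟨hx1, hx2⟩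
        refine ⟨hx1, ?_, hx2⟩
        rintro rfl
        exact hadj (((SimpleGraph.mem_neighborFinset _ _ _).1 hx1).symm)
    rw [h1]; ring

lemma reduce_append [Fintype V] {S : Finset V} {f : V → ℤ}
    (h : Reduce G save S f) :
    ∀ (T : Finset V), S ⊆ T →
      (∀ v ∈ T, v ∉ S → 0 ≤ f v - ((G.neighborFinset v ∩ S).card : ℤ)) →
      Reduce G save (T \ S) (fun v => f v - ((G.neighborFinset v ∩ S).card : ℤ)) →
      Reduce G save T f := by
  induction h with
  | empty f =>
      intro T _ _ hrest
      rw [Finset.sdiff_empty] at hrest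
      exact reduce_congr hrest (fun v _ => by simp)
  | @delete S' f' u hu hleg h ih =>
      intro T hST hbound hrest
      have hvS : ∀ v, v ∈ T → v ∉ S' → v ≠ u := fun v _ hv hvu => hv (hvu ▸ hu)
      refine .delete u (hST hu) (fun v hv => ?_) ?_
      · rcases Finset.mem_erase.1 hv with ⟨hvu, hvT⟩
        by_cases hvS' : v ∈ S'
        · exact hleg v (Finset.mem_erase.2 ⟨hvu, hvS'⟩)
        · have hb := hbound v hvT hvS'
          have hcard : G.Adj u v → 1 ≤ ((G.neighborFinset v ∩ S').card : ℤ) := by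
            intro hadj
            have : u ∈ G.neighborFinset v ∩ S' := by
              simp [SimpleGraph.mem_neighborFinset, hadj.symm, hu]
            exact_mod_cast Finset.card_pos.2 ⟨u, this⟩
          have hcard0 : 0 ≤ ((G.neighborFinset v ∩ S').card : ℤ) := Nat.cast_nonneg _
          split
          · have := hcard (by assumption); omega
          · omega
      · refine ih (T.erase u) (fun x hx => Finset.mem_erase.2
          ⟨(Finset.mem_erase.1 hx).1, hST (Finset.mem_erase.1 hx).2⟩) ?_ ?_
        · intro v hv hvS'
          rcases Finset.mem_erase.1 hv with ⟨hvu, hvT⟩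
          have hvnS : v ∉ S' := fun hx => hvS' (Finset.mem_erase.2 ⟨hvu, hx⟩)
          have := hbound v hvT hvnS
          rw [card_nbr_erase u v S' hu hvu]
          dsimp only
          split <;> omega
        · have hset : T.erase u \ S'.erase u = T \ S' := by
            ext x
            simp only [Finset.mem_sdiff, Finset.mem_erase]
            constructor
            · rintro ⟨⟨hxu, hxT⟩, hx2⟩
              exact ⟨hxT, fun hxS => hx2 ⟨hxu, hxS⟩⟩
            · rintro ⟨hxT, hxS⟩
              have hxu : x ≠ u := fun h => hxS (h ▸ hu)
              exact ⟨⟨hxu, hxT⟩, fun h => hxS h.2⟩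
          rw [hset]
          refine reduce_congr hrest (fun v hv => ?_)
          rcases Finset.mem_sdiff.1 hv with ⟨hvT, hvS'⟩
          have hvu : v ≠ u := hvS v hvT hvS'
          rw [card_nbr_erase u v S' hu hvu]
          dsimp only
          split <;> ring
  | @deleteSave S' f' u w hsave hu hw hadj hfw hleg h ih =>
      intro T hST hbound hrest
      have hvS : ∀ v, v ∈ T → v ∉ S' → v ≠ u := fun v _ hv hvu => hv (hvu ▸ hu)
      have hvSw : ∀ v, v ∉ S' → v ≠ w := fun v hv hvw => hv (hvw ▸ hw)
      refine .deleteSave u w hsave (hST hu) (hST hw) hadj hfw (fun v hv => ?_) ?_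
      · rcases Finset.mem_erase.1 hv with ⟨hvu, hvT⟩
        by_cases hvS' : v ∈ S'
        · exact hleg v (Finset.mem_erase.2 ⟨hvu, hvS'⟩)
        · have hb := hbound v hvT hvS'
          have hcard : G.Adj u v → 1 ≤ ((G.neighborFinset v ∩ S').card : ℤ) := by
            intro hadj
            have : u ∈ G.neighborFinset v ∩ S' := by
              simp [SimpleGraph.mem_neighborFinset, hadj.symm, hu]
            exact_mod_cast Finset.card_pos.2 ⟨u, this⟩
          have hcard0 : 0 ≤ ((G.neighborFinset v ∩ S').card : ℤ) := Nat.cast_nonneg _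
          split
          · next hc => have := hcard hc.1; omega
          · omega
      · refine ih (T.erase u) (fun x hx => Finset.mem_erase.2
          ⟨(Finset.mem_erase.1 hx).1, hST (Finset.mem_erase.1 hx).2⟩) ?_ ?_
        · intro v hv hvS'
          rcases Finset.mem_erase.1 hv with ⟨hvu, hvT⟩
          have hvnS : v ∉ S' := fun hx => hvS' (Finset.mem_erase.2 ⟨hvu, hx⟩)
          have := hbound v hvT hvnS
          have hvw := hvSw v hvnS
          rw [card_nbr_erase u v S' hu hvu]
          dsimp only
          by_cases hc : G.Adj u v
          · rw [if_pos ⟨hc, hvw⟩, if_pos hc]; omega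
          · rw [if_neg (by tauto), if_neg hc]; omega
        · have hset : T.erase u \ S'.erase u = T \ S' := by
            ext x
            simp only [Finset.mem_sdiff, Finset.mem_erase]
            constructor
            · rintro ⟨⟨hxu, hxT⟩, hx2⟩
              exact ⟨hxT, fun hxS => hx2 ⟨hxu, hxS⟩⟩
            · rintro ⟨hxT, hxS⟩
              have hxu : x ≠ u := fun h => hxS (h ▸ hu)
              exact ⟨⟨hxu, hxT⟩, fun h => hxS h.2⟩
          rw [hset]
          refine reduce_congr hrest (fun v hv => ?_)
          rcases Finset.mem_sdiff.1 hv with ⟨hvT, hvS'⟩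
          have hvu : v ≠ u := hvS v hvT hvS'
          have hvw := hvSw v hvS'
          rw [card_nbr_erase u v S' hu hvu]
          dsimp only
          by_cases hc : G.Adj u v
          · rw [if_pos ⟨hc, hvw⟩, if_pos hc]; ring
          · rw [if_neg (by tauto), if_neg hc]; ring

lemma reduce_map {V₁ V₂ : Type*} [DecidableEq V₁] [DecidableEq V₂]
    {G : SimpleGraph V₂} {H : SimpleGraph V₁} (ι : V₁ ↪ V₂)
    (hind : ∀ a b, H.Adj a b ↔ G.Adj (ι a) (ι b)) {sv : Bool}
    {S : Finset V₁} {f : V₁ → ℤ} (h : Reduce H sv S f) :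
    ∀ g : V₂ → ℤ, (∀ a ∈ S, g (ι a) = f a) → Reduce G sv (S.map ι) g := by
  induction h with
  | empty f => intro g _; simp only [Finset.map_empty]; exact .empty g
  | @delete S' f' u hu hleg h ih =>
      intro g hg
      refine .delete (ι u) (Finset.mem_map_of_mem ι hu) (fun v hv => ?_) ?_
      · rw [← Finset.map_erase] at hv
        rcases Finset.mem_map.1 hv with ⟨a, ha, rfl⟩
        have h1 := hleg a ha
        rw [hg a (Finset.mem_of_mem_erase ha)]
        by_cases hc : H.Adj u a
        · rw [if_pos ((hind u a).1 hc)]; rw [if_pos hc] at h1; exact h1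
        · rw [if_neg (fun hc2 => hc ((hind u a).2 hc2))]
          rw [if_neg hc] at h1; exact h1
      · rw [← Finset.map_erase]
        refine ih _ (fun a ha => ?_)
        dsimp only
        rw [hg a (Finset.mem_of_mem_erase ha)]
        by_cases hc : H.Adj u a
        · rw [if_pos ((hind u a).1 hc), if_pos hc]
        · rw [if_neg (fun hc2 => hc ((hind u a).2 hc2)), if_neg hc]
  | @deleteSave S' f' u w hsave hu hw hadj hfw hleg h ih =>
      intro g hg
      refine .deleteSave (ι u) (ι w) hsave (Finset.mem_map_of_mem ι hu)
        (Finset.mem_map_of_mem ι hw) ((hind u w).1 hadj) ?_ (fun v hv => ?_) ?_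
      · rw [hg u hu, hg w hw]; exact hfw
      · rw [← Finset.map_erase] at hv
        rcases Finset.mem_map.1 hv with ⟨a, ha, rfl⟩
        have h1 := hleg a ha
        rw [hg a (Finset.mem_of_mem_erase ha)]
        by_cases hc : H.Adj u a ∧ a ≠ w
        · rw [if_pos ⟨(hind u a).1 hc.1, fun he => hc.2 (ι.injective he)⟩]
          rw [if_pos hc] at h1; exact h1
        · rw [if_neg (fun hc2 => hc ⟨(hind u a).2 hc2.1, fun he => hc2.2 (he ▸ rfl)⟩)]
          rw [if_neg hc] at h1; exact h1
      · rw [← Finset.map_erase]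
        refine ih _ (fun a ha => ?_)
        dsimp only
        rw [hg a (Finset.mem_of_mem_erase ha)]
        by_cases hc : H.Adj u a ∧ a ≠ w
        · rw [if_pos ⟨(hind u a).1 hc.1, fun he => hc.2 (ι.injective he)⟩, if_pos hc]
        · rw [if_neg (fun hc2 => hc ⟨(hind u a).2 hc2.1, fun he => hc2.2 (he ▸ rfl)⟩), if_neg hc]

lemma reduce_greedy [Fintype V] (S : Finset V) (f : V → ℤ)
    (hf : ∀ v ∈ S, ((G.neighborFinset v ∩ S).card : ℤ) ≤ f v) : Reduce G save S f := by
  obtain ⟨n, hn⟩ : ∃ n, S.card = n := ⟨_, rfl⟩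
  induction n generalizing S f with
  | zero =>
      rw [Finset.card_eq_zero] at hn
      subst hn; exact .empty f
  | succ n ih =>
      have hS : S.Nonempty := Finset.card_pos.1 (by omega)
      obtain ⟨u, hu⟩ := hS
      refine .delete u hu (fun v hv => ?_) ?_
      · rcases Finset.mem_erase.1 hv with ⟨hvu, hvS⟩
        have h1 := hf v hvS
        have hcard : G.Adj u v → 1 ≤ ((G.neighborFinset v ∩ S).card : ℤ) := by
          intro hadj
          have : u ∈ G.neighborFinset v ∩ S := by
            simp [SimpleGraph.mem_neighborFinset, hadj.symm, hu]
          exact_mod_cast Finset.card_pos.2 ⟨u, this⟩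
        split
        · have := hcard (by assumption); omega
        · have : (0:ℤ) ≤ (G.neighborFinset v ∩ S).card := Nat.cast_nonneg _
          omega
      · refine ih _ _ (fun v hv => ?_) (by rw [Finset.card_erase_of_mem hu, hn]; omega)
        rcases Finset.mem_erase.1 hv with ⟨hvu, hvS⟩
        have h1 := hf v hvS
        rw [card_nbr_erase u v S hu hvu]
        try dsimp only
        split <;> omega

lemma card_out {W : Type*} [Fintype W] [DecidableEq W] (G : SimpleGraph W) (C : Finset W)
    (v : W) : ((G.neighborFinset v ∩ (Finset.univ \ C)).card : ℤ)
      = (G.degree v : ℤ) - ((G.neighborFinset v ∩ C).card : ℤ) := by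
  have h1 : G.neighborFinset v ∩ (Finset.univ \ C) = G.neighborFinset v \ C := by
    ext x; simp [Finset.mem_sdiff]
  rw [h1]
  have h2 := Finset.card_inter_add_card_sdiff (G.neighborFinset v) C
  have h3 : (G.neighborFinset v).card = G.degree v := rfl
  omega
/-- Minimal-counterexample principle: suppose that every connected graph with minimum
degree at least 4, with no `K₅⁻` subgraph, belonging to a subgraph-closed class `𝒢`,
contains an induced kite, an induced `K₅` minus two adjacent edges, or an induced house,
all of whose vertices have degree 4.  Then every graph in `𝒢` with no `K₅⁻` subgraph is
weakly 3-degenerate. -/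
theorem stmt15
    (𝒢 : ∀ (W : Type) [Fintype W] [DecidableEq W], SimpleGraph W → Prop)
    -- `𝒢` is subgraph-closed:
    (hclosed : ∀ (W₁ W₂ : Type) [Fintype W₁] [DecidableEq W₁] [Fintype W₂] [DecidableEq W₂]
      (G : SimpleGraph W₂) (H : SimpleGraph W₁) (ι : W₁ ↪ W₂),
      (∀ a b : W₁, H.Adj a b → G.Adj (ι a) (ι b)) → 𝒢 W₂ G → 𝒢 W₁ H)
    -- the structural hypothesis:
    (hstruct : ∀ (W : Type) [Fintype W] [DecidableEq W] (G : SimpleGraph W),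
      𝒢 W G → G.Connected → (∀ v : W, 4 ≤ G.degree v) → ¬ HasK5MinusSubgraph G →
      HasInducedKite4 G ∨ HasInducedK5mm4 G ∨ HasInducedHouse4 G) :
    ∀ (W : Type) [Fintype W] [DecidableEq W] (G : SimpleGraph W),
      𝒢 W G → ¬ HasK5MinusSubgraph G → WeaklyFDegenerate G (fun _ => (3 : ℤ)) := by
  suffices H : ∀ n : ℕ, ∀ (W : Type) [Fintype W] [DecidableEq W] (G : SimpleGraph W),
      Fintype.card W = n → 𝒢 W G → ¬ HasK5MinusSubgraph G →
      WeaklyFDegenerate G (fun _ => (3 : ℤ)) by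
    intro W _ _ G hG hK
    exact H _ W G rfl hG hK
  intro n
  induction n using Nat.strong_induction_on with
  | _ n IH =>
  intro W _ _ G hcard hG hK5
  -- Any proper Finset of vertices can be reduced starting from the constant 3 function.
  have key : ∀ s : Finset W, s ≠ Finset.univ → Reduce G true s (fun _ => (3 : ℤ)) := by
    intro s hs
    let ι : {x // x ∈ s} ↪ W := Function.Embedding.subtype _
    let Gs : SimpleGraph {x // x ∈ s} := G.comap (fun x => ι x)
    have hGsG : 𝒢 _ Gs := hclosed _ _ G Gs ι (fun a b h => h) hG
    have hKs : ¬ HasK5MinusSubgraph Gs := by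
      rintro ⟨a, b, c, d, e, h1, h2, h3, h4, h5, h6, h7, h8, h9, h10,
        h11, h12, h13, h14, h15, h16, h17, h18, h19⟩
      exact hK5 ⟨ι a, ι b, ι c, ι d, ι e,
        fun h => h1 (ι.injective h), fun h => h2 (ι.injective h), fun h => h3 (ι.injective h),
        fun h => h4 (ι.injective h), fun h => h5 (ι.injective h), fun h => h6 (ι.injective h),
        fun h => h7 (ι.injective h), fun h => h8 (ι.injective h), fun h => h9 (ι.injective h),
        fun h => h10 (ι.injective h),
        h11, h12, h13, h14, h15, h16, h17, h18, h19⟩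
    have hlt : Fintype.card {x // x ∈ s} < n := by
      have h1 : Fintype.card {x // x ∈ s} = s.card := Fintype.card_coe s
      have h2 : s.card < Finset.univ.card :=
        Finset.card_lt_card (lt_of_le_of_ne (Finset.subset_univ s) hs)
      rw [Finset.card_univ, hcard] at h2
      omega
    have hred : WeaklyFDegenerate Gs (fun _ => (3 : ℤ)) :=
      IH _ hlt _ Gs rfl hGsG hKs
    have hmap := reduce_map ι (fun a b => Iff.rfl) hred (fun _ => (3 : ℤ)) (fun a _ => rfl)
    have huniv : Finset.univ.map ι = s := by
      ext v
      simp only [Finset.mem_map]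
      constructor
      · rintro ⟨⟨a, ha⟩, -, rfl⟩; exact ha
      · intro hv; exact ⟨⟨v, hv⟩, Finset.mem_univ _, rfl⟩
    rwa [huniv] at hmap
  show Reduce G true Finset.univ (fun _ => (3 : ℤ))
  -- empty case
  by_cases hn0 : n = 0
  · have : (Finset.univ : Finset W) = ∅ := by
      rw [← Finset.card_eq_zero, Finset.card_univ, hcard, hn0]
    rw [this]; exact .empty _
  have hne : Nonempty W := by
    rw [← Fintype.card_pos_iff, hcard]; omega
  -- low-degree case
  by_cases hdeg : ∃ v : W, G.degree v ≤ 3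
  · obtain ⟨v, hv⟩ := hdeg
    have hs : (Finset.univ.erase v) ≠ Finset.univ := fun h =>
      (Finset.notMem_erase v _) (h ▸ Finset.mem_univ v)
    refine reduce_append (key _ hs) Finset.univ (Finset.subset_univ _) ?_ ?_
    · intro x hx hxs
      have hxv : x = v := by
        by_contra hxv
        exact hxs (Finset.mem_erase.2 ⟨hxv, hx⟩)
      subst hxv
      have h1 : (G.neighborFinset x ∩ Finset.univ.erase x).card ≤ G.degree x :=
        Finset.card_le_card (Finset.inter_subset_left)
      omega
    · have hset : Finset.univ \ Finset.univ.erase v = {v} := by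
        ext x
        simp only [Finset.mem_sdiff, Finset.mem_univ, true_and, Finset.mem_erase,
          Finset.mem_singleton]
        tauto
      rw [hset]
      refine .delete v (Finset.mem_singleton_self v) (fun x hx => absurd hx (by simp)) ?_
      rw [Finset.erase_singleton]
      exact .empty _
  push_neg at hdeg
  have hdeg4 : ∀ v : W, 4 ≤ G.degree v := fun v => by have := hdeg v; omega
  -- connectivity
  obtain ⟨v0⟩ := hne
  by_cases hconn : (Finset.univ.filter (fun w => G.Reachable v0 w)) = Finset.univ
  case neg =>
    -- disconnected: split into the component of v0 and the rest
    set s := Finset.univ.filter (fun w => G.Reachable v0 w) with hsdef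
    have hmem : ∀ w, w ∈ s ↔ G.Reachable v0 w := by
      intro w; simp [hsdef]
    have hcross : ∀ v, v ∉ s → G.neighborFinset v ∩ s = ∅ := by
      intro v hv
      ext y
      simp only [Finset.mem_inter, SimpleGraph.mem_neighborFinset, Finset.notMem_empty,
        iff_false, not_and]
      intro hadj hy
      exact hv ((hmem v).2 (((hmem y).1 hy).trans hadj.symm.reachable))
    refine reduce_append (key s hconn) Finset.univ (Finset.subset_univ _) ?_ ?_
    · intro x hx hxs
      rw [hcross x hxs]
      simp
    · have hsne : Finset.univ \ s ≠ Finset.univ := by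
        intro h
        have h0 : v0 ∈ s := (hmem v0).2 (SimpleGraph.Reachable.refl v0)
        have := Finset.mem_sdiff.1 (h ▸ Finset.mem_univ v0)
        exact this.2 h0
      refine reduce_congr (key _ hsne) (fun v hv => ?_)
      rw [hcross v (Finset.mem_sdiff.1 hv).2]
      simp
  case pos =>
    have hconn' : G.Connected := by
      rw [SimpleGraph.connected_iff]
      refine ⟨fun a b => ?_, ⟨v0⟩⟩
      have ha : G.Reachable v0 a := by
        have := hconn ▸ Finset.mem_univ a
        simpa using (Finset.mem_filter.1 (hconn.symm ▸ Finset.mem_univ a)).2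
      have hb : G.Reachable v0 b := by
        simpa using (Finset.mem_filter.1 (hconn.symm ▸ Finset.mem_univ b)).2
      exact ha.symm.trans hb
    rcases hstruct W G hG hconn' hdeg4 hK5 with hkite | hk5 | hhouse
    · obtain ⟨a, b, c, d, hab, hac, had, hbc, hbd, hcd, Gab, Gbc, Gcd, Gda, Gac, nbd,
        dega, degb, degc, degd⟩ := hkite
      have Gad : G.Adj a d := Gda.symm
      have Gca : G.Adj c a := Gac.symm
      have Gcb : G.Adj c b := Gbc.symm
      have Gdc : G.Adj d c := Gcd.symm
      have Gba : G.Adj b a := Gab.symm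
      have ndb : ¬ G.Adj d b := fun h => nbd h.symm
      set C : Finset W := {a, b, c, d} with hC
      have haC : a ∈ C := by simp [hC]
      have hbC : b ∈ C := by simp [hC]
      have hCs : Finset.univ \ C ≠ Finset.univ := fun h =>
        (Finset.mem_sdiff.1 (h ▸ Finset.mem_univ a)).2 haC
      have hia : G.neighborFinset a ∩ C = {b, c, d} := by
        ext x
        simp only [Finset.mem_inter, SimpleGraph.mem_neighborFinset, hC, Finset.mem_insert,
          Finset.mem_singleton]
        constructor
        · rintro ⟨hadj, rfl | rfl | rfl | rfl⟩
          exacts [absurd hadj (G.loopless.irrefl _), Or.inl rfl, Or.inr (Or.inl rfl),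
            Or.inr (Or.inr rfl)]
        · rintro (rfl | rfl | rfl)
          exacts [⟨Gab, Or.inr (Or.inl rfl)⟩, ⟨Gac, Or.inr (Or.inr (Or.inl rfl))⟩,
            ⟨Gad, Or.inr (Or.inr (Or.inr rfl))⟩]
      have hib : G.neighborFinset b ∩ C = {a, c} := by
        ext x
        simp only [Finset.mem_inter, SimpleGraph.mem_neighborFinset, hC, Finset.mem_insert,
          Finset.mem_singleton]
        constructor
        · rintro ⟨hadj, rfl | rfl | rfl | rfl⟩
          exacts [Or.inl rfl, absurd hadj (G.loopless.irrefl _), Or.inr rfl, absurd hadj nbd]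
        · rintro (rfl | rfl)
          exacts [⟨Gba, Or.inl rfl⟩, ⟨Gbc, Or.inr (Or.inr (Or.inl rfl))⟩]
      have hic : G.neighborFinset c ∩ C = {a, b, d} := by
        ext x
        simp only [Finset.mem_inter, SimpleGraph.mem_neighborFinset, hC, Finset.mem_insert,
          Finset.mem_singleton]
        constructor
        · rintro ⟨hadj, rfl | rfl | rfl | rfl⟩
          exacts [Or.inl rfl, Or.inr (Or.inl rfl), absurd hadj (G.loopless.irrefl _),
            Or.inr (Or.inr rfl)]
        · rintro (rfl | rfl | rfl)
          exacts [⟨Gca, Or.inl rfl⟩, ⟨Gcb, Or.inr (Or.inl rfl)⟩,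
            ⟨Gcd, Or.inr (Or.inr (Or.inr rfl))⟩]
      have hid : G.neighborFinset d ∩ C = {a, c} := by
        ext x
        simp only [Finset.mem_inter, SimpleGraph.mem_neighborFinset, hC, Finset.mem_insert,
          Finset.mem_singleton]
        constructor
        · rintro ⟨hadj, rfl | rfl | rfl | rfl⟩
          exacts [Or.inl rfl, absurd hadj ndb, Or.inr rfl, absurd hadj (G.loopless.irrefl _)]
        · rintro (rfl | rfl)
          exacts [⟨Gda, Or.inl rfl⟩, ⟨Gdc, Or.inr (Or.inr (Or.inl rfl))⟩]
      have hcbcd : (({b, c, d} : Finset W)).card = 3 := by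
        rw [Finset.card_insert_of_notMem (by simp [hbc, hbd]),
          Finset.card_insert_of_notMem (by simp [hcd]), Finset.card_singleton]
      have hcac : (({a, c} : Finset W)).card = 2 := by
        rw [Finset.card_insert_of_notMem (by simp [hac]), Finset.card_singleton]
      have hcabd : (({a, b, d} : Finset W)).card = 3 := by
        rw [Finset.card_insert_of_notMem (by simp [hab, had]),
          Finset.card_insert_of_notMem (by simp [hbd]), Finset.card_singleton]
      have hoa : ((G.neighborFinset a ∩ (Finset.univ \ C)).card : ℤ) = 1 := by
        rw [card_out, hia, hcbcd, dega]; norm_num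
      have hob : ((G.neighborFinset b ∩ (Finset.univ \ C)).card : ℤ) = 2 := by
        rw [card_out, hib, hcac, degb]; norm_num
      have hoc : ((G.neighborFinset c ∩ (Finset.univ \ C)).card : ℤ) = 1 := by
        rw [card_out, hic, hcabd, degc]; norm_num
      have hod : ((G.neighborFinset d ∩ (Finset.univ \ C)).card : ℤ) = 2 := by
        rw [card_out, hid, hcac, degd]; norm_num
      refine reduce_append (key _ hCs) Finset.univ (Finset.subset_univ _) ?_ ?_
      · intro x hx hxs
        have hxC : x ∈ C := by
          by_contra hxC
          exact hxs (Finset.mem_sdiff.2 ⟨hx, hxC⟩)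
        rw [hC] at hxC
        simp only [Finset.mem_insert, Finset.mem_singleton] at hxC
        rcases hxC with h | h | h | h <;> rw [h]
        · rw [hoa]; norm_num
        · rw [hob]; norm_num
        · rw [hoc]; norm_num
        · rw [hod]; norm_num
      · have hsd : Finset.univ \ (Finset.univ \ C) = C := by
          rw [Finset.sdiff_sdiff_self_left, Finset.univ_inter]
        rw [hsd]
        refine reduce_congr (?_ : Reduce G true C
          (fun v => if v = a then 2 else if v = c then 2 else 1)) (fun v hv => ?_)
        swap
        · rw [hC] at hv
          simp only [Finset.mem_insert, Finset.mem_singleton] at hv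
          rcases hv with h | h | h | h <;> rw [h]
          · norm_num [hoa]
          · norm_num [hob, Ne.symm hab, hbc]
          · norm_num [hoc, Ne.symm hac]
          · norm_num [hod, Ne.symm had, Ne.symm hcd]
        have heA : C.erase a = ({b, c, d} : Finset W) := by
          rw [hC, Finset.erase_insert (by simp [hab, hac, had])]
        have heC : ({b, c, d} : Finset W).erase c = {b, d} := by
          ext x
          simp only [Finset.mem_erase, Finset.mem_insert, Finset.mem_singleton]
          constructor
          · rintro ⟨hne, rfl | rfl | rfl⟩
            exacts [Or.inl rfl, absurd rfl hne, Or.inr rfl]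
          · rintro (rfl | rfl)
            exacts [⟨hbc, Or.inl rfl⟩, ⟨Ne.symm hcd, Or.inr (Or.inr rfl)⟩]
        refine Reduce.deleteSave a b rfl haC hbC Gab ?_ ?_ ?_
        · norm_num [Ne.symm hab, hbc]
        · intro v hv
          rw [heA] at hv
          simp only [Finset.mem_insert, Finset.mem_singleton] at hv
          rcases hv with h | h | h <;> rw [h]
          · norm_num [Ne.symm hab, hbc]
          · norm_num [Gac, Ne.symm hbc, Ne.symm hac]
          · norm_num [Gad, Ne.symm hbd, Ne.symm had, Ne.symm hcd]
        rw [heA]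
        refine Reduce.deleteSave c d rfl (by simp) (by simp) Gcd ?_ ?_ ?_
        · norm_num [Gad, Gac, Ne.symm hbd, Ne.symm had, Ne.symm hcd, Ne.symm hac, Ne.symm hbc]
        · intro v hv
          rw [heC] at hv
          simp only [Finset.mem_insert, Finset.mem_singleton] at hv
          rcases hv with h | h <;> rw [h]
          · norm_num [Gcb, hbd, Ne.symm hab, hbc, Ne.symm hbc]
          · norm_num [Gad, Ne.symm hbd, Ne.symm had, Ne.symm hcd]
        rw [heC]
        refine reduce_greedy _ _ (fun v hv => ?_)
        simp only [Finset.mem_insert, Finset.mem_singleton] at hv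
        rcases hv with h | h <;> rw [h]
        · have h0 : G.neighborFinset b ∩ ({b, d} : Finset W) = ∅ := by
            ext x
            simp only [Finset.mem_inter, SimpleGraph.mem_neighborFinset, Finset.mem_insert,
              Finset.mem_singleton, Finset.notMem_empty, iff_false, not_and]
            rintro hadj (rfl | rfl)
            · exact G.loopless.irrefl _ hadj
            · exact nbd hadj
          rw [h0]
          norm_num [Gcb, hbd, Ne.symm hab, hbc, Ne.symm hbc]
        · have h0 : G.neighborFinset d ∩ ({b, d} : Finset W) = ∅ := by
            ext x
            simp only [Finset.mem_inter, SimpleGraph.mem_neighborFinset, Finset.mem_insert,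
              Finset.mem_singleton, Finset.notMem_empty, iff_false, not_and]
            rintro hadj (rfl | rfl)
            · exact ndb hadj
            · exact G.loopless.irrefl _ hadj
          rw [h0]
          norm_num [Gad, Ne.symm hbd, Ne.symm had, Ne.symm hcd]
    · obtain ⟨p1, p2, p3, p4, p5, h12, h13, h14, h15, h23, h24, h25, h34, h35, h45,
        A12, A13, A14, A15, A23, A34, A35, A45, n24, n25, d1, d2, d3, d4, d5⟩ := hk5
      have A21 : G.Adj p2 p1 := A12.symm
      have A31 : G.Adj p3 p1 := A13.symm
      have A41 : G.Adj p4 p1 := A14.symm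
      have A51 : G.Adj p5 p1 := A15.symm
      have A32 : G.Adj p3 p2 := A23.symm
      have A43 : G.Adj p4 p3 := A34.symm
      have A53 : G.Adj p5 p3 := A35.symm
      have A54 : G.Adj p5 p4 := A45.symm
      have n42 : ¬ G.Adj p4 p2 := fun h => n24 h.symm
      have n52 : ¬ G.Adj p5 p2 := fun h => n25 h.symm
      set C : Finset W := {p1, p2, p3, p4, p5} with hC
      have hCs : Finset.univ \ C ≠ Finset.univ := fun h =>
        (Finset.mem_sdiff.1 (h ▸ Finset.mem_univ p1)).2 (by simp [hC])
      have hi1 : G.neighborFinset p1 ∩ C = {p2, p3, p4, p5} := by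
        ext x
        simp only [Finset.mem_inter, SimpleGraph.mem_neighborFinset, hC, Finset.mem_insert,
          Finset.mem_singleton]
        constructor
        · rintro ⟨hadj, rfl | rfl | rfl | rfl | rfl⟩
          exacts [absurd hadj (G.loopless.irrefl _), Or.inl rfl, Or.inr (Or.inl rfl),
            Or.inr (Or.inr (Or.inl rfl)), Or.inr (Or.inr (Or.inr rfl))]
        · rintro (rfl | rfl | rfl | rfl)
          exacts [⟨A12, Or.inr (Or.inl rfl)⟩, ⟨A13, Or.inr (Or.inr (Or.inl rfl))⟩,
            ⟨A14, Or.inr (Or.inr (Or.inr (Or.inl rfl)))⟩,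
            ⟨A15, Or.inr (Or.inr (Or.inr (Or.inr rfl)))⟩]
      have hi2 : G.neighborFinset p2 ∩ C = {p1, p3} := by
        ext x
        simp only [Finset.mem_inter, SimpleGraph.mem_neighborFinset, hC, Finset.mem_insert,
          Finset.mem_singleton]
        constructor
        · rintro ⟨hadj, rfl | rfl | rfl | rfl | rfl⟩
          exacts [Or.inl rfl, absurd hadj (G.loopless.irrefl _), Or.inr rfl, absurd hadj n24,
            absurd hadj n25]
        · rintro (rfl | rfl)
          exacts [⟨A21, Or.inl rfl⟩, ⟨A23, Or.inr (Or.inr (Or.inl rfl))⟩]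
      have hi3 : G.neighborFinset p3 ∩ C = {p1, p2, p4, p5} := by
        ext x
        simp only [Finset.mem_inter, SimpleGraph.mem_neighborFinset, hC, Finset.mem_insert,
          Finset.mem_singleton]
        constructor
        · rintro ⟨hadj, rfl | rfl | rfl | rfl | rfl⟩
          exacts [Or.inl rfl, Or.inr (Or.inl rfl), absurd hadj (G.loopless.irrefl _),
            Or.inr (Or.inr (Or.inl rfl)), Or.inr (Or.inr (Or.inr rfl))]
        · rintro (rfl | rfl | rfl | rfl)
          exacts [⟨A31, Or.inl rfl⟩, ⟨A32, Or.inr (Or.inl rfl)⟩,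
            ⟨A34, Or.inr (Or.inr (Or.inr (Or.inl rfl)))⟩,
            ⟨A35, Or.inr (Or.inr (Or.inr (Or.inr rfl)))⟩]
      have hi4 : G.neighborFinset p4 ∩ C = {p1, p3, p5} := by
        ext x
        simp only [Finset.mem_inter, SimpleGraph.mem_neighborFinset, hC, Finset.mem_insert,
          Finset.mem_singleton]
        constructor
        · rintro ⟨hadj, rfl | rfl | rfl | rfl | rfl⟩
          exacts [Or.inl rfl, absurd hadj n42, Or.inr (Or.inl rfl),
            absurd hadj (G.loopless.irrefl _), Or.inr (Or.inr rfl)]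
        · rintro (rfl | rfl | rfl)
          exacts [⟨A41, Or.inl rfl⟩, ⟨A43, Or.inr (Or.inr (Or.inl rfl))⟩,
            ⟨A45, Or.inr (Or.inr (Or.inr (Or.inr rfl)))⟩]
      have hi5 : G.neighborFinset p5 ∩ C = {p1, p3, p4} := by
        ext x
        simp only [Finset.mem_inter, SimpleGraph.mem_neighborFinset, hC, Finset.mem_insert,
          Finset.mem_singleton]
        constructor
        · rintro ⟨hadj, rfl | rfl | rfl | rfl | rfl⟩
          exacts [Or.inl rfl, absurd hadj n52, Or.inr (Or.inl rfl), Or.inr (Or.inr rfl),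
            absurd hadj (G.loopless.irrefl _)]
        · rintro (rfl | rfl | rfl)
          exacts [⟨A51, Or.inl rfl⟩, ⟨A53, Or.inr (Or.inr (Or.inl rfl))⟩,
            ⟨A54, Or.inr (Or.inr (Or.inr (Or.inl rfl)))⟩]
      have hc1 : (({p2, p3, p4, p5} : Finset W)).card = 4 := by
        rw [Finset.card_insert_of_notMem (by simp [h23, h24, h25]),
          Finset.card_insert_of_notMem (by simp [h34, h35]),
          Finset.card_insert_of_notMem (by simp [h45]), Finset.card_singleton]
      have hc2 : (({p1, p3} : Finset W)).card = 2 := by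
        rw [Finset.card_insert_of_notMem (by simp [h13]), Finset.card_singleton]
      have hc3 : (({p1, p2, p4, p5} : Finset W)).card = 4 := by
        rw [Finset.card_insert_of_notMem (by simp [h12, h14, h15]),
          Finset.card_insert_of_notMem (by simp [h24, h25]),
          Finset.card_insert_of_notMem (by simp [h45]), Finset.card_singleton]
      have hc4 : (({p1, p3, p5} : Finset W)).card = 3 := by
        rw [Finset.card_insert_of_notMem (by simp [h13, h15]),
          Finset.card_insert_of_notMem (by simp [h35]), Finset.card_singleton]
      have hc5 : (({p1, p3, p4} : Finset W)).card = 3 := by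
        rw [Finset.card_insert_of_notMem (by simp [h13, h14]),
          Finset.card_insert_of_notMem (by simp [h34]), Finset.card_singleton]
      have ho1 : ((G.neighborFinset p1 ∩ (Finset.univ \ C)).card : ℤ) = 0 := by
        rw [card_out, hi1, hc1, d1]; norm_num
      have ho2 : ((G.neighborFinset p2 ∩ (Finset.univ \ C)).card : ℤ) = 2 := by
        rw [card_out, hi2, hc2, d2]; norm_num
      have ho3 : ((G.neighborFinset p3 ∩ (Finset.univ \ C)).card : ℤ) = 0 := by
        rw [card_out, hi3, hc3, d3]; norm_num
      have ho4 : ((G.neighborFinset p4 ∩ (Finset.univ \ C)).card : ℤ) = 1 := by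
        rw [card_out, hi4, hc4, d4]; norm_num
      have ho5 : ((G.neighborFinset p5 ∩ (Finset.univ \ C)).card : ℤ) = 1 := by
        rw [card_out, hi5, hc5, d5]; norm_num
      refine reduce_append (key _ hCs) Finset.univ (Finset.subset_univ _) ?_ ?_
      · intro x hx hxs
        have hxC : x ∈ C := by
          by_contra hxC
          exact hxs (Finset.mem_sdiff.2 ⟨hx, hxC⟩)
        rw [hC] at hxC
        simp only [Finset.mem_insert, Finset.mem_singleton] at hxC
        rcases hxC with h | h | h | h | h <;> rw [h]
        · rw [ho1]; norm_num
        · rw [ho2]; norm_num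
        · rw [ho3]; norm_num
        · rw [ho4]; norm_num
        · rw [ho5]; norm_num
      · have hsd : Finset.univ \ (Finset.univ \ C) = C := by
          rw [Finset.sdiff_sdiff_self_left, Finset.univ_inter]
        rw [hsd]
        refine reduce_congr (?_ : Reduce G true C
          (fun v => if v = p2 then 1 else if v = p4 then 2 else if v = p5 then 2 else 3))
          (fun v hv => ?_)
        swap
        · rw [hC] at hv
          simp only [Finset.mem_insert, Finset.mem_singleton] at hv
          rcases hv with h | h | h | h | h <;> rw [h]
          · norm_num [ho1, h12, h14, h15]
          · norm_num [ho2]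
          · norm_num [ho3, Ne.symm h23, h34, h35]
          · norm_num [ho4, Ne.symm h24]
          · norm_num [ho5, Ne.symm h25, Ne.symm h45]
        have heA : C.erase p1 = ({p2, p3, p4, p5} : Finset W) := by
          rw [hC, Finset.erase_insert (by simp [h12, h13, h14, h15])]
        have heB : ({p2, p3, p4, p5} : Finset W).erase p3 = {p2, p4, p5} := by
          ext x
          simp only [Finset.mem_erase, Finset.mem_insert, Finset.mem_singleton]
          constructor
          · rintro ⟨hne, rfl | rfl | rfl | rfl⟩
            exacts [Or.inl rfl, absurd rfl hne, Or.inr (Or.inl rfl), Or.inr (Or.inr rfl)]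
          · rintro (rfl | rfl | rfl)
            exacts [⟨h23, Or.inl rfl⟩, ⟨Ne.symm h34, Or.inr (Or.inr (Or.inl rfl))⟩,
              ⟨Ne.symm h35, Or.inr (Or.inr (Or.inr rfl))⟩]
        have heD : ({p2, p4, p5} : Finset W).erase p4 = {p2, p5} := by
          ext x
          simp only [Finset.mem_erase, Finset.mem_insert, Finset.mem_singleton]
          constructor
          · rintro ⟨hne, rfl | rfl | rfl⟩
            exacts [Or.inl rfl, absurd rfl hne, Or.inr rfl]
          · rintro (rfl | rfl)
            exacts [⟨h24, Or.inl rfl⟩, ⟨Ne.symm h45, Or.inr (Or.inr rfl)⟩]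
        refine Reduce.deleteSave p1 p2 rfl (by simp [hC]) (by simp [hC]) A12 ?_ ?_ ?_
        · norm_num [h12, h14, h15]
        · intro v hv
          rw [heA] at hv
          simp only [Finset.mem_insert, Finset.mem_singleton] at hv
          rcases hv with h | h | h | h <;> rw [h]
          · norm_num
          · norm_num [A13, Ne.symm h23, h34, h35]
          · norm_num [A14, Ne.symm h24]
          · norm_num [A15, Ne.symm h25, Ne.symm h45]
        rw [heA]
        refine Reduce.deleteSave p3 p4 rfl (by simp) (by simp [Ne.symm h34]) A34 ?_ ?_ ?_
        · norm_num [A13, A14, Ne.symm h23, Ne.symm h24, h34, h35]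
        · intro v hv
          rw [heB] at hv
          simp only [Finset.mem_insert, Finset.mem_singleton] at hv
          rcases hv with h | h | h <;> rw [h]
          · norm_num [A32, h24]
          · norm_num [A14, Ne.symm h24]
          · norm_num [A35, A15, Ne.symm h45, Ne.symm h25]
        rw [heB]
        refine Reduce.deleteSave p4 p5 rfl (by simp [Ne.symm h24]) (by simp [Ne.symm h25, Ne.symm h45]) A45 ?_ ?_ ?_
        · norm_num [A35, A15, A14, Ne.symm h45, Ne.symm h25, Ne.symm h24]
        · intro v hv
          rw [heD] at hv
          simp only [Finset.mem_insert, Finset.mem_singleton] at hv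
          rcases hv with h | h <;> rw [h]
          · norm_num [n42, A32, h24, h25]
          · norm_num [A35, A15, Ne.symm h45, Ne.symm h25]
        rw [heD]
        refine reduce_greedy _ _ (fun v hv => ?_)
        simp only [Finset.mem_insert, Finset.mem_singleton] at hv
        rcases hv with h | h <;> rw [h]
        · have h0 : G.neighborFinset p2 ∩ ({p2, p5} : Finset W) = ∅ := by
            ext x
            simp only [Finset.mem_inter, SimpleGraph.mem_neighborFinset, Finset.mem_insert,
              Finset.mem_singleton, Finset.notMem_empty, iff_false, not_and]
            rintro hadj (rfl | rfl)
            · exact G.loopless.irrefl _ hadj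
            · exact n25 hadj
          rw [h0]
          norm_num [n42, A32, h24, h25]
        · have h0 : G.neighborFinset p5 ∩ ({p2, p5} : Finset W) = ∅ := by
            ext x
            simp only [Finset.mem_inter, SimpleGraph.mem_neighborFinset, Finset.mem_insert,
              Finset.mem_singleton, Finset.notMem_empty, iff_false, not_and]
            rintro hadj (rfl | rfl)
            · exact n52 hadj
            · exact G.loopless.irrefl _ hadj
          rw [h0]
          norm_num [A35, A15, Ne.symm h45, Ne.symm h25]
    · obtain ⟨q1, q2, q3, q4, q5, h12, h13, h14, h15, h23, h24, h25, h34, h35, h45,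
        A12, A23, A34, A41, A15, A45, n13, n24, n25, n35, d1, d2, d3, d4, d5⟩ := hhouse
      have A21 : G.Adj q2 q1 := A12.symm
      have A32 : G.Adj q3 q2 := A23.symm
      have A43 : G.Adj q4 q3 := A34.symm
      have A14 : G.Adj q1 q4 := A41.symm
      have A51 : G.Adj q5 q1 := A15.symm
      have A54 : G.Adj q5 q4 := A45.symm
      have n31 : ¬ G.Adj q3 q1 := fun h => n13 h.symm
      have n42 : ¬ G.Adj q4 q2 := fun h => n24 h.symm
      have n52 : ¬ G.Adj q5 q2 := fun h => n25 h.symm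
      have n53 : ¬ G.Adj q5 q3 := fun h => n35 h.symm
      set C : Finset W := {q1, q2, q3, q4, q5} with hC
      have hCs : Finset.univ \ C ≠ Finset.univ := fun h =>
        (Finset.mem_sdiff.1 (h ▸ Finset.mem_univ q1)).2 (by simp [hC])
      have hi1 : G.neighborFinset q1 ∩ C = {q2, q4, q5} := by
        ext x
        simp only [Finset.mem_inter, SimpleGraph.mem_neighborFinset, hC, Finset.mem_insert,
          Finset.mem_singleton]
        constructor
        · rintro ⟨hadj, rfl | rfl | rfl | rfl | rfl⟩
          exacts [absurd hadj (G.loopless.irrefl _), Or.inl rfl, absurd hadj n13,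
            Or.inr (Or.inl rfl), Or.inr (Or.inr rfl)]
        · rintro (rfl | rfl | rfl)
          exacts [⟨A12, Or.inr (Or.inl rfl)⟩, ⟨A14, Or.inr (Or.inr (Or.inr (Or.inl rfl)))⟩,
            ⟨A15, Or.inr (Or.inr (Or.inr (Or.inr rfl)))⟩]
      have hi2 : G.neighborFinset q2 ∩ C = {q1, q3} := by
        ext x
        simp only [Finset.mem_inter, SimpleGraph.mem_neighborFinset, hC, Finset.mem_insert,
          Finset.mem_singleton]
        constructor
        · rintro ⟨hadj, rfl | rfl | rfl | rfl | rfl⟩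
          exacts [Or.inl rfl, absurd hadj (G.loopless.irrefl _), Or.inr rfl, absurd hadj n24,
            absurd hadj n25]
        · rintro (rfl | rfl)
          exacts [⟨A21, Or.inl rfl⟩, ⟨A23, Or.inr (Or.inr (Or.inl rfl))⟩]
      have hi3 : G.neighborFinset q3 ∩ C = {q2, q4} := by
        ext x
        simp only [Finset.mem_inter, SimpleGraph.mem_neighborFinset, hC, Finset.mem_insert,
          Finset.mem_singleton]
        constructor
        · rintro ⟨hadj, rfl | rfl | rfl | rfl | rfl⟩
          exacts [absurd hadj n31, Or.inl rfl, absurd hadj (G.loopless.irrefl _), Or.inr rfl,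
            absurd hadj n35]
        · rintro (rfl | rfl)
          exacts [⟨A32, Or.inr (Or.inl rfl)⟩, ⟨A34, Or.inr (Or.inr (Or.inr (Or.inl rfl)))⟩]
      have hi4 : G.neighborFinset q4 ∩ C = {q1, q3, q5} := by
        ext x
        simp only [Finset.mem_inter, SimpleGraph.mem_neighborFinset, hC, Finset.mem_insert,
          Finset.mem_singleton]
        constructor
        · rintro ⟨hadj, rfl | rfl | rfl | rfl | rfl⟩
          exacts [Or.inl rfl, absurd hadj n42, Or.inr (Or.inl rfl),
            absurd hadj (G.loopless.irrefl _), Or.inr (Or.inr rfl)]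
        · rintro (rfl | rfl | rfl)
          exacts [⟨A41, Or.inl rfl⟩, ⟨A43, Or.inr (Or.inr (Or.inl rfl))⟩,
            ⟨A45, Or.inr (Or.inr (Or.inr (Or.inr rfl)))⟩]
      have hi5 : G.neighborFinset q5 ∩ C = {q1, q4} := by
        ext x
        simp only [Finset.mem_inter, SimpleGraph.mem_neighborFinset, hC, Finset.mem_insert,
          Finset.mem_singleton]
        constructor
        · rintro ⟨hadj, rfl | rfl | rfl | rfl | rfl⟩
          exacts [Or.inl rfl, absurd hadj n52, absurd hadj n53, Or.inr rfl,
            absurd hadj (G.loopless.irrefl _)]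
        · rintro (rfl | rfl)
          exacts [⟨A51, Or.inl rfl⟩, ⟨A54, Or.inr (Or.inr (Or.inr (Or.inl rfl)))⟩]
      have hc1 : (({q2, q4, q5} : Finset W)).card = 3 := by
        rw [Finset.card_insert_of_notMem (by simp [h24, h25]),
          Finset.card_insert_of_notMem (by simp [h45]), Finset.card_singleton]
      have hc2 : (({q1, q3} : Finset W)).card = 2 := by
        rw [Finset.card_insert_of_notMem (by simp [h13]), Finset.card_singleton]
      have hc3 : (({q2, q4} : Finset W)).card = 2 := by
        rw [Finset.card_insert_of_notMem (by simp [h24]), Finset.card_singleton]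
      have hc4 : (({q1, q3, q5} : Finset W)).card = 3 := by
        rw [Finset.card_insert_of_notMem (by simp [h13, h15]),
          Finset.card_insert_of_notMem (by simp [h35]), Finset.card_singleton]
      have hc5 : (({q1, q4} : Finset W)).card = 2 := by
        rw [Finset.card_insert_of_notMem (by simp [h14]), Finset.card_singleton]
      have ho1 : ((G.neighborFinset q1 ∩ (Finset.univ \ C)).card : ℤ) = 1 := by
        rw [card_out, hi1, hc1, d1]; norm_num
      have ho2 : ((G.neighborFinset q2 ∩ (Finset.univ \ C)).card : ℤ) = 2 := by
        rw [card_out, hi2, hc2, d2]; norm_num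
      have ho3 : ((G.neighborFinset q3 ∩ (Finset.univ \ C)).card : ℤ) = 2 := by
        rw [card_out, hi3, hc3, d3]; norm_num
      have ho4 : ((G.neighborFinset q4 ∩ (Finset.univ \ C)).card : ℤ) = 1 := by
        rw [card_out, hi4, hc4, d4]; norm_num
      have ho5 : ((G.neighborFinset q5 ∩ (Finset.univ \ C)).card : ℤ) = 2 := by
        rw [card_out, hi5, hc5, d5]; norm_num
      refine reduce_append (key _ hCs) Finset.univ (Finset.subset_univ _) ?_ ?_
      · intro x hx hxs
        have hxC : x ∈ C := by
          by_contra hxC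
          exact hxs (Finset.mem_sdiff.2 ⟨hx, hxC⟩)
        rw [hC] at hxC
        simp only [Finset.mem_insert, Finset.mem_singleton] at hxC
        rcases hxC with h | h | h | h | h <;> rw [h]
        · rw [ho1]; norm_num
        · rw [ho2]; norm_num
        · rw [ho3]; norm_num
        · rw [ho4]; norm_num
        · rw [ho5]; norm_num
      · have hsd : Finset.univ \ (Finset.univ \ C) = C := by
          rw [Finset.sdiff_sdiff_self_left, Finset.univ_inter]
        rw [hsd]
        refine reduce_congr (?_ : Reduce G true C
          (fun v => if v = q1 then 2 else if v = q4 then 2 else 1)) (fun v hv => ?_)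
        swap
        · rw [hC] at hv
          simp only [Finset.mem_insert, Finset.mem_singleton] at hv
          rcases hv with h | h | h | h | h <;> rw [h]
          · norm_num [ho1]
          · norm_num [ho2, Ne.symm h12, h24]
          · norm_num [ho3, Ne.symm h13, h34]
          · norm_num [ho4, Ne.symm h14]
          · norm_num [ho5, Ne.symm h15, Ne.symm h45]
        have heA : C.erase q1 = ({q2, q3, q4, q5} : Finset W) := by
          rw [hC, Finset.erase_insert (by simp [h12, h13, h14, h15])]
        have heB : ({q2, q3, q4, q5} : Finset W).erase q4 = {q2, q3, q5} := by
          ext x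
          simp only [Finset.mem_erase, Finset.mem_insert, Finset.mem_singleton]
          constructor
          · rintro ⟨hne, rfl | rfl | rfl | rfl⟩
            exacts [Or.inl rfl, Or.inr (Or.inl rfl), absurd rfl hne, Or.inr (Or.inr rfl)]
          · rintro (rfl | rfl | rfl)
            exacts [⟨h24, Or.inl rfl⟩, ⟨h34, Or.inr (Or.inl rfl)⟩,
              ⟨Ne.symm h45, Or.inr (Or.inr (Or.inr rfl))⟩]
        have heD : ({q2, q3, q5} : Finset W).erase q2 = {q3, q5} := by
          ext x
          simp only [Finset.mem_erase, Finset.mem_insert, Finset.mem_singleton]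
          constructor
          · rintro ⟨hne, rfl | rfl | rfl⟩
            exacts [absurd rfl hne, Or.inl rfl, Or.inr rfl]
          · rintro (rfl | rfl)
            exacts [⟨Ne.symm h23, Or.inr (Or.inl rfl)⟩, ⟨Ne.symm h25, Or.inr (Or.inr rfl)⟩]
        refine Reduce.deleteSave q1 q2 rfl (by simp [hC]) (by simp [hC]) A12 ?_ ?_ ?_
        · norm_num [Ne.symm h12, h24]
        · intro v hv
          rw [heA] at hv
          simp only [Finset.mem_insert, Finset.mem_singleton] at hv
          rcases hv with h | h | h | h <;> rw [h]
          · norm_num [Ne.symm h12, h24]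
          · norm_num [n13, Ne.symm h13, h34]
          · norm_num [A14, Ne.symm h24, Ne.symm h14]
          · norm_num [A15, Ne.symm h25, Ne.symm h15, Ne.symm h45]
        rw [heA]
        refine Reduce.deleteSave q4 q5 rfl (by simp) (by simp [Ne.symm h45]) A45 ?_ ?_ ?_
        · norm_num [A15, A14, Ne.symm h25, Ne.symm h24, Ne.symm h15, Ne.symm h45, Ne.symm h14]
        · intro v hv
          rw [heB] at hv
          simp only [Finset.mem_insert, Finset.mem_singleton] at hv
          rcases hv with h | h | h <;> rw [h]
          · norm_num [n42, Ne.symm h12, h24]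
          · norm_num [A43, h35, n13, Ne.symm h13, h34]
          · norm_num [A15, Ne.symm h25, Ne.symm h15, Ne.symm h45]
        rw [heB]
        refine Reduce.deleteSave q2 q3 rfl (by simp) (by simp [Ne.symm h23]) A23 ?_ ?_ ?_
        · norm_num [A43, h35, n13, n42, Ne.symm h12, h24, Ne.symm h13, h34]
        · intro v hv
          rw [heD] at hv
          simp only [Finset.mem_insert, Finset.mem_singleton] at hv
          rcases hv with h | h <;> rw [h]
          · norm_num [A43, h35, n13, Ne.symm h13, h34]
          · norm_num [n25, A15, Ne.symm h25, Ne.symm h15, Ne.symm h45]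
        rw [heD]
        refine reduce_greedy _ _ (fun v hv => ?_)
        simp only [Finset.mem_insert, Finset.mem_singleton] at hv
        rcases hv with h | h <;> rw [h]
        · have h0 : G.neighborFinset q3 ∩ ({q3, q5} : Finset W) = ∅ := by
            ext x
            simp only [Finset.mem_inter, SimpleGraph.mem_neighborFinset, Finset.mem_insert,
              Finset.mem_singleton, Finset.notMem_empty, iff_false, not_and]
            rintro hadj (rfl | rfl)
            · exact G.loopless.irrefl _ hadj
            · exact n35 hadj
          rw [h0]
          norm_num [A43, h35, n13, Ne.symm h13, h34]
        · have h0 : G.neighborFinset q5 ∩ ({q3, q5} : Finset W) = ∅ := by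
            ext x
            simp only [Finset.mem_inter, SimpleGraph.mem_neighborFinset, Finset.mem_insert,
              Finset.mem_singleton, Finset.notMem_empty, iff_false, not_and]
            rintro hadj (rfl | rfl)
            · exact n53 hadj
            · exact G.loopless.irrefl _ hadj
          rw [h0]
          norm_num [n25, A15, Ne.symm h25, Ne.symm h15, Ne.symm h45]
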